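/- Let X be a compact Hausdorff space, A a C(X)-algebra, a ∈ A, and x ∈ X. Then ‖π_x(a)‖ = inf{‖(1 − f + f(x))·a‖ : f ∈ C(X)}, where π_x : A → A/(C₀(X∖{x})·A) is the quotient map and 1 − f + f(x) acts via the multiplier structure. -/

import Mathlib

set_option linter.unusedSectionVars false
set_option maxHeartbeats 1000000

open Metric
open scoped MultiplierAlgebra

/-- The closed ideal `C₀(X∖{x})·A` of a `C(X)`-algebra `A`, where the `C(X)`-structure is
given by a unital *-homomorphism `Φ : C(X) → M(A)` with central range. -/
def fibreIdeal {X : Type*} [TopologicalSpace X] [CompactSpace X] [T2Space X]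
    {A : Type*} [NonUnitalNormedRing A] [StarRing A] [CStarRing A]
    [NormedSpace ℂ A] [SMulCommClass ℂ A A] [IsScalarTower ℂ A A] [StarModule ℂ A]
    [NormedStarGroup A]
    (Φ : C(X, ℂ) →⋆ₐ[ℂ] 𝓜(ℂ, A)) (x : X) : Set A :=
  closure (Submodule.span ℂ
    {b : A | ∃ (f : C(X, ℂ)) (c : A), f x = 0 ∧ b = (Φ f).toProd.1 c} : Set A)

section Helpers

variable {X : Type*} [TopologicalSpace X] [CompactSpace X] [T2Space X]
    {A : Type*} [NonUnitalNormedRing A] [StarRing A] [CStarRing A]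
    [NormedSpace ℂ A] [SMulCommClass ℂ A A] [IsScalarTower ℂ A A] [StarModule ℂ A]
    [NormedStarGroup A]
    (Φ : C(X, ℂ) →⋆ₐ[ℂ] 𝓜(ℂ, A))

/-- operator bound for the left action of a multiplier -/
lemma mult_apply_le (m : 𝓜(ℂ, A)) (b : A) : ‖m.toProd.1 b‖ ≤ ‖m‖ * ‖b‖ := by
  calc ‖m.toProd.1 b‖ ≤ ‖m.toProd.1‖ * ‖b‖ := (m.toProd.1).le_opNorm b
  _ = ‖m‖ * ‖b‖ := by rw [DoubleCentralizer.norm_fst]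

lemma norm_one_M_le : ‖(1 : 𝓜(ℂ, A))‖ ≤ 1 := by
  rw [← DoubleCentralizer.norm_fst, DoubleCentralizer.one_fst,
    ContinuousLinearMap.one_def]
  exact ContinuousLinearMap.norm_id_le

/-- A real-valued function of sup norm at most one is mapped to a multiplier of norm
at most one, via the unitary trick `w = u + i√(1-u²)`. -/
lemma keyA (u : C(X, ℂ)) (him : ∀ s, (u s).im = 0) (hle : ∀ s, ‖u s‖ ≤ 1) :
    ‖Φ u‖ ≤ 1 := by
  have hsq : ∀ t, ‖u t‖ ^ 2 ≤ 1 := fun t => by nlinarith [hle t, norm_nonneg (u t)]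
  have hcont : Continuous fun t => u t + (Real.sqrt (1 - ‖u t‖ ^ 2) : ℂ) * Complex.I := by
    apply u.continuous.add
    exact (Complex.continuous_ofReal.comp
      ((continuous_const.sub (u.continuous.norm.pow 2)).sqrt)).mul continuous_const
  set w : C(X, ℂ) := ⟨fun t => u t + (Real.sqrt (1 - ‖u t‖ ^ 2) : ℂ) * Complex.I, hcont⟩
    with hw
  have hre : ∀ t, (u t).re ^ 2 = ‖u t‖ ^ 2 := by
    intro t
    rw [Complex.sq_norm, Complex.normSq_apply, him t]
    ring
  have hwconj : ∀ t, (starRingEnd ℂ) (w t) * w t = 1 := by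
    intro t
    have h1 : Real.sqrt (1 - ‖u t‖ ^ 2) ^ 2 = 1 - ‖u t‖ ^ 2 :=
      Real.sq_sqrt (by linarith [hsq t])
    have h3 := hre t
    have hval : Complex.normSq (w t) = 1 := by
      simp only [hw, ContinuousMap.coe_mk, Complex.normSq_apply, Complex.add_re, Complex.add_im,
        Complex.mul_re, Complex.mul_im, Complex.I_re, Complex.I_im, Complex.ofReal_re,
        Complex.ofReal_im, him t]
      nlinarith [h1, h3]
    rw [← Complex.normSq_eq_conj_mul_self, hval, Complex.ofReal_one]
  have hwmul : star w * w = 1 := by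
    ext t
    simp only [ContinuousMap.mul_apply, ContinuousMap.star_apply, ContinuousMap.one_apply,
      Complex.star_def]
    exact hwconj t
  have hwu : star w + w = (2 : ℂ) • u := by
    ext t
    have h2 := him t
    simp only [ContinuousMap.add_apply, ContinuousMap.star_apply, ContinuousMap.smul_apply,
      smul_eq_mul, hw, ContinuousMap.coe_mk, Complex.star_def]
    apply Complex.ext <;>
      simp [Complex.add_im, Complex.add_re, Complex.mul_re, Complex.mul_im, h2] <;> ring
  have hΦw : ‖Φ w‖ ≤ 1 := by
    have h1 : ‖Φ w‖ * ‖Φ w‖ = ‖star (Φ w) * Φ w‖ := (CStarRing.norm_star_mul_self).symm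
    rw [← map_star, ← map_mul, hwmul, map_one] at h1
    nlinarith [norm_one_M_le (A := A), norm_nonneg (Φ w), h1]
  have hΦu : Φ u = (2 : ℂ)⁻¹ • (star (Φ w) + Φ w) := by
    rw [← map_star, ← map_add, hwu, map_smul, smul_smul]
    norm_num
  rw [hΦu, norm_smul]
  have hsum : ‖star (Φ w) + Φ w‖ ≤ 2 := by
    calc ‖star (Φ w) + Φ w‖ ≤ ‖star (Φ w)‖ + ‖Φ w‖ := norm_add_le _ _
    _ = ‖Φ w‖ + ‖Φ w‖ := by rw [norm_star]
    _ ≤ 2 := by linarith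
  calc ‖(2 : ℂ)⁻¹‖ * ‖star (Φ w) + Φ w‖ ≤ ‖(2 : ℂ)⁻¹‖ * 2 :=
        mul_le_mul_of_nonneg_left hsum (norm_nonneg _)
  _ = 1 := by norm_num

/-- norm bound for real-valued functions -/
lemma keyA' (u : C(X, ℂ)) (him : ∀ s, (u s).im = 0) : ‖Φ u‖ ≤ ‖u‖ := by
  rcases eq_or_ne u 0 with rfl | hu
  · simp
  · have hr : 0 < ‖u‖ := norm_pos_iff.2 hu
    set v : C(X, ℂ) := ((‖u‖⁻¹ : ℝ) : ℂ) • u with hv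
    have hvim : ∀ s, (v s).im = 0 := by
      intro s
      simp [hv, him s]
    have hvle : ∀ s, ‖v s‖ ≤ 1 := by
      intro s
      simp only [hv, ContinuousMap.coe_smul, Pi.smul_apply, smul_eq_mul, norm_mul]
      rw [Complex.norm_real, Real.norm_eq_abs, abs_of_nonneg (by positivity)]
      rw [inv_mul_le_one₀ hr]
      simpa using u.norm_coe_le_norm s
    have hkey := keyA Φ v hvim hvle
    rw [hv, map_smul, norm_smul, Complex.norm_real, Real.norm_eq_abs,
      abs_of_nonneg (by positivity)] at hkey
    calc ‖Φ u‖ = ‖u‖ * (‖u‖⁻¹ * ‖Φ u‖) := by field_simp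
    _ ≤ ‖u‖ * 1 := mul_le_mul_of_nonneg_left hkey hr.le
    _ = ‖u‖ := mul_one _

/-- norm bound for arbitrary functions, with a factor of 2 -/
lemma keyC (h : C(X, ℂ)) : ‖Φ h‖ ≤ 2 * ‖h‖ := by
  set hre : C(X, ℂ) := ⟨fun s => ((h s).re : ℂ), by fun_prop⟩ with hhre
  set him : C(X, ℂ) := ⟨fun s => ((h s).im : ℂ), by fun_prop⟩ with hhim
  have hsplit : h = hre + Complex.I • him := by
    ext s
    simp only [ContinuousMap.add_apply, ContinuousMap.smul_apply,
      smul_eq_mul, hhre, hhim, ContinuousMap.coe_mk]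
    rw [mul_comm]
    exact (Complex.re_add_im (h s)).symm
  have h1 : ‖Φ hre‖ ≤ ‖h‖ := by
    refine (keyA' Φ hre fun s => by simp [hhre]).trans ?_
    rw [ContinuousMap.norm_le _ (norm_nonneg h)]
    intro s
    simp only [hhre, ContinuousMap.coe_mk, Complex.norm_real, Real.norm_eq_abs]
    exact (Complex.abs_re_le_norm (h s)).trans (h.norm_coe_le_norm s)
  have h2 : ‖Φ him‖ ≤ ‖h‖ := by
    refine (keyA' Φ him fun s => by simp [hhim]).trans ?_
    rw [ContinuousMap.norm_le _ (norm_nonneg h)]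
    intro s
    simp only [hhim, ContinuousMap.coe_mk, Complex.norm_real, Real.norm_eq_abs]
    exact (Complex.abs_im_le_norm (h s)).trans (h.norm_coe_le_norm s)
  calc ‖Φ h‖ = ‖Φ hre + Complex.I • Φ him‖ := by rw [hsplit, map_add, map_smul]
  _ ≤ ‖Φ hre‖ + ‖Complex.I • Φ him‖ := norm_add_le _ _
  _ = ‖Φ hre‖ + ‖Φ him‖ := by rw [norm_smul, Complex.norm_I, one_mul]
  _ ≤ 2 * ‖h‖ := by linarith

/-- associativity of the action -/
lemma mul_act (p q : C(X, ℂ)) (b : A) :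
    (Φ (p * q)).toProd.1 b = (Φ p).toProd.1 ((Φ q).toProd.1 b) := by
  rw [map_mul]
  rw [show (Φ p * Φ q).toProd.1 = (Φ p).toProd.1 * (Φ q).toProd.1 from
    DoubleCentralizer.mul_fst _ _]
  rfl

lemma one_act (b : A) : (Φ 1).toProd.1 b = b := by
  rw [map_one]
  rw [show (1 : 𝓜(ℂ, A)).toProd.1 = 1 from DoubleCentralizer.one_fst]
  rfl

lemma sub_act (p q : C(X, ℂ)) (b : A) :
    (Φ (p - q)).toProd.1 b = (Φ p).toProd.1 b - (Φ q).toProd.1 b := by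
  rw [map_sub]
  rw [show (Φ p - Φ q).toProd.1 = (Φ p).toProd.1 - (Φ q).toProd.1 from
    DoubleCentralizer.sub_fst _ _]
  rfl

lemma one_sub_act (q : C(X, ℂ)) (b : A) :
    (Φ (1 - q)).toProd.1 b = b - (Φ q).toProd.1 b := by
  rw [sub_act, one_act]

/-- key bound for real valued functions with values in `[0,1]` -/
lemma keyB (g : C(X, ℂ)) (him : ∀ s, (g s).im = 0) (h0 : ∀ s, 0 ≤ (g s).re)
    (h1 : ∀ s, (g s).re ≤ 1) (b : A) : ‖b - (Φ g).toProd.1 b‖ ≤ ‖b‖ := by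
  have him' : ∀ s, ((1 - g) s).im = 0 := by
    intro s; simp [him s]
  have hle : ∀ s, ‖(1 - g) s‖ ≤ 1 := by
    intro s
    have heq : (1 - g) s = (((1 : ℝ) - (g s).re : ℝ) : ℂ) := by
      apply Complex.ext <;> simp [him s]
    rw [heq, Complex.norm_real, Real.norm_eq_abs, abs_of_nonneg (by linarith [h1 s])]
    linarith [h0 s]
  rw [← one_sub_act]
  calc ‖(Φ (1 - g)).toProd.1 b‖ ≤ ‖Φ (1 - g)‖ * ‖b‖ := mult_apply_le _ _
  _ ≤ 1 * ‖b‖ := mul_le_mul_of_nonneg_right (keyA Φ _ him' hle) (norm_nonneg b)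
  _ = ‖b‖ := one_mul _

/-- Approximate-unit property for elements of the algebraic span. -/
lemma approx_unit (x : X) (j' : A)
    (hj' : j' ∈ Submodule.span ℂ
      {b : A | ∃ (f : C(X, ℂ)) (c : A), f x = 0 ∧ b = (Φ f).toProd.1 c}) :
    ∀ δ > 0, ∃ g : C(X, ℂ), g x = 0 ∧ (∀ s, (g s).im = 0) ∧
      (∀ s, 0 ≤ (g s).re) ∧ (∀ s, (g s).re ≤ 1) ∧ ‖j' - (Φ g).toProd.1 j'‖ < δ := by
  induction hj' using Submodule.span_induction with
  | mem b hb =>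
    obtain ⟨f, c, hfx, rfl⟩ := hb
    intro δ hδ
    set d : ℝ := δ / (2 * (‖c‖ + 1)) with hd
    have hc1 : (0 : ℝ) < ‖c‖ + 1 := by positivity
    have hdpos : 0 < d := by positivity
    set t : ℝ := d ^ 2 with ht
    have htpos : 0 < t := by positivity
    have hcont : Continuous fun s => ((‖f s‖ ^ 2 / (‖f s‖ ^ 2 + t) : ℝ) : ℂ) := by
      apply Complex.continuous_ofReal.comp
      exact (f.continuous.norm.pow 2).div
        ((f.continuous.norm.pow 2).add continuous_const)
        (fun s => by positivity)
    set g : C(X, ℂ) := ⟨fun s => ((‖f s‖ ^ 2 / (‖f s‖ ^ 2 + t) : ℝ) : ℂ), hcont⟩ with hg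
    refine ⟨g, ?_, ?_, ?_, ?_, ?_⟩
    · simp [hg, hfx]
    · intro s
      simp only [hg, ContinuousMap.coe_mk, Complex.ofReal_im]
    · intro s
      simp only [hg, ContinuousMap.coe_mk, Complex.ofReal_re]
      positivity
    · intro s
      simp only [hg, ContinuousMap.coe_mk, Complex.ofReal_re]
      rw [div_le_one (by positivity)]
      linarith
    · -- the estimate
      have hrw : (Φ f).toProd.1 c - (Φ g).toProd.1 ((Φ f).toProd.1 c) =
          (Φ (f - g * f)).toProd.1 c := by
        rw [sub_act, mul_act]
      rw [hrw]
      have hnorm : ‖f - g * f‖ ≤ d := by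
        rw [ContinuousMap.norm_le _ hdpos.le]
        intro s
        have hfs : f s - g s * f s = ((t / (‖f s‖ ^ 2 + t) : ℝ) : ℂ) * f s := by
          have heq2 : ((t / (‖f s‖ ^ 2 + t) : ℝ) : ℂ) = 1 - g s := by
            simp only [hg, ContinuousMap.coe_mk]
            rw [eq_sub_iff_add_eq, ← Complex.ofReal_add, ← Complex.ofReal_one]
            congr 1
            field_simp
            ring
          rw [heq2]
          ring
        rw [show (f - g * f) s = f s - g s * f s by simp, hfs, norm_mul,
          Complex.norm_real, Real.norm_eq_abs, abs_of_nonneg (by positivity)]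
        set r := ‖f s‖ with hr
        have hrnn : 0 ≤ r := norm_nonneg _
        rw [div_mul_eq_mul_div, div_le_iff₀ (by positivity)]
        nlinarith [sq_nonneg (r - d / 2), sq_nonneg d, hdpos.le]
      calc ‖(Φ (f - g * f)).toProd.1 c‖ ≤ ‖Φ (f - g * f)‖ * ‖c‖ := mult_apply_le _ _
      _ ≤ (2 * ‖f - g * f‖) * ‖c‖ :=
          mul_le_mul_of_nonneg_right (keyC Φ _) (norm_nonneg c)
      _ ≤ (2 * d) * ‖c‖ := by
          apply mul_le_mul_of_nonneg_right (by linarith) (norm_nonneg c)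
      _ < (2 * d) * (‖c‖ + 1) := by
          apply mul_lt_mul_of_pos_left (by linarith) (by positivity)
      _ = δ := by
          rw [hd]; field_simp
  | zero =>
    intro δ hδ
    refine ⟨0, by simp, by simp, by simp, by simp, ?_⟩
    simpa using hδ
  | add y z hy hz hPy hPz =>
    intro δ hδ
    obtain ⟨g₁, hx₁, him₁, h0₁, h1₁, hb₁⟩ := hPy (δ / 2) (by linarith)
    obtain ⟨g₂, hx₂, him₂, h0₂, h1₂, hb₂⟩ := hPz (δ / 2) (by linarith)
    set g : C(X, ℂ) := g₁ + g₂ - g₁ * g₂ with hg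
    have hgim : ∀ s, (g s).im = 0 := by
      intro s
      simp [hg, Complex.add_im, Complex.sub_im, Complex.mul_im, him₁ s, him₂ s]
    have hgre : ∀ s, (g s).re = (g₁ s).re + (g₂ s).re - (g₁ s).re * (g₂ s).re := by
      intro s
      simp [hg, Complex.add_re, Complex.sub_re, Complex.mul_re, him₁ s, him₂ s]
    refine ⟨g, ?_, hgim, ?_, ?_, ?_⟩
    · simp [hg, hx₁, hx₂]
    · intro s
      rw [hgre s]
      nlinarith [h0₁ s, h0₂ s, h1₁ s, h1₂ s]
    · intro s
      rw [hgre s]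
      nlinarith [h0₁ s, h0₂ s, h1₁ s, h1₂ s]
    · -- the estimate for the sum
      have hone : (1 : C(X, ℂ)) - g = (1 - g₂) * (1 - g₁) := by
        rw [hg]; ring
      have hone' : (1 : C(X, ℂ)) - g = (1 - g₁) * (1 - g₂) := by
        rw [hg]; ring
      have himm₁ : ∀ s, ((1 - g₁ : C(X, ℂ)) s).im = 0 := fun s => by simp [him₁ s]
      have himm₂ : ∀ s, ((1 - g₂ : C(X, ℂ)) s).im = 0 := fun s => by simp [him₂ s]
      have hle₁ : ∀ s, ‖(1 - g₁ : C(X, ℂ)) s‖ ≤ 1 := by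
        intro s
        have heq : (1 - g₁ : C(X, ℂ)) s = (((1 : ℝ) - (g₁ s).re : ℝ) : ℂ) := by
          apply Complex.ext <;> simp [him₁ s]
        rw [heq, Complex.norm_real, Real.norm_eq_abs, abs_of_nonneg (by linarith [h1₁ s])]
        linarith [h0₁ s]
      have hle₂ : ∀ s, ‖(1 - g₂ : C(X, ℂ)) s‖ ≤ 1 := by
        intro s
        have heq : (1 - g₂ : C(X, ℂ)) s = (((1 : ℝ) - (g₂ s).re : ℝ) : ℂ) := by
          apply Complex.ext <;> simp [him₂ s]
        rw [heq, Complex.norm_real, Real.norm_eq_abs, abs_of_nonneg (by linarith [h1₂ s])]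
        linarith [h0₂ s]
      have hdecomp : (y + z) - (Φ g).toProd.1 (y + z) =
          (Φ (1 - g₂)).toProd.1 ((Φ (1 - g₁)).toProd.1 y) +
          (Φ (1 - g₁)).toProd.1 ((Φ (1 - g₂)).toProd.1 z) := by
        rw [← one_sub_act]
        rw [map_add]
        nth_rewrite 1 [hone]
        nth_rewrite 1 [hone']
        rw [mul_act, mul_act]
      rw [hdecomp]
      have key₁ : ‖(Φ (1 - g₂)).toProd.1 ((Φ (1 - g₁)).toProd.1 y)‖ < δ / 2 := by
        calc ‖(Φ (1 - g₂)).toProd.1 ((Φ (1 - g₁)).toProd.1 y)‖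
            ≤ ‖Φ (1 - g₂)‖ * ‖(Φ (1 - g₁)).toProd.1 y‖ := mult_apply_le _ _
        _ ≤ 1 * ‖(Φ (1 - g₁)).toProd.1 y‖ :=
            mul_le_mul_of_nonneg_right (keyA Φ _ himm₂ hle₂) (norm_nonneg _)
        _ = ‖(Φ (1 - g₁)).toProd.1 y‖ := one_mul _
        _ < δ / 2 := by rw [one_sub_act]; exact hb₁
      have key₂ : ‖(Φ (1 - g₁)).toProd.1 ((Φ (1 - g₂)).toProd.1 z)‖ < δ / 2 := by
        calc ‖(Φ (1 - g₁)).toProd.1 ((Φ (1 - g₂)).toProd.1 z)‖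
            ≤ ‖Φ (1 - g₁)‖ * ‖(Φ (1 - g₂)).toProd.1 z‖ := mult_apply_le _ _
        _ ≤ 1 * ‖(Φ (1 - g₂)).toProd.1 z‖ :=
            mul_le_mul_of_nonneg_right (keyA Φ _ himm₁ hle₁) (norm_nonneg _)
        _ = ‖(Φ (1 - g₂)).toProd.1 z‖ := one_mul _
        _ < δ / 2 := by rw [one_sub_act]; exact hb₂
      calc ‖(Φ (1 - g₂)).toProd.1 ((Φ (1 - g₁)).toProd.1 y) +
          (Φ (1 - g₁)).toProd.1 ((Φ (1 - g₂)).toProd.1 z)‖ ≤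
          ‖(Φ (1 - g₂)).toProd.1 ((Φ (1 - g₁)).toProd.1 y)‖ +
          ‖(Φ (1 - g₁)).toProd.1 ((Φ (1 - g₂)).toProd.1 z)‖ := norm_add_le _ _
      _ < δ / 2 + δ / 2 := add_lt_add key₁ key₂
      _ = δ := by ring
  | smul z y hy hPy =>
    intro δ hδ
    rcases eq_or_ne z 0 with rfl | hz
    · refine ⟨0, by simp, by simp, by simp, by simp, ?_⟩
      simpa using hδ
    · have hzpos : 0 < ‖z‖ := norm_pos_iff.2 hz
      obtain ⟨g, hgx, him, h0, h1, hb⟩ := hPy (δ / ‖z‖) (by positivity)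
      refine ⟨g, hgx, him, h0, h1, ?_⟩
      have hsmul : z • y - (Φ g).toProd.1 (z • y) = z • (y - (Φ g).toProd.1 y) := by
        rw [smul_sub, (Φ g).toProd.1.map_smul]
      rw [hsmul, norm_smul]
      calc ‖z‖ * ‖y - (Φ g).toProd.1 y‖ < ‖z‖ * (δ / ‖z‖) :=
        mul_lt_mul_of_pos_left hb hzpos
      _ = δ := by rw [mul_comm, div_mul_cancel₀ _ hzpos.ne']

end Helpers

/-- `‖π_x(a)‖ = inf {‖(1 − f + f(x))·a‖ : f ∈ C(X)}`: the quotient norm of the image of `a`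
in `A/(C₀(X∖{x})·A)` equals the infimum of the norms `‖a − f·a + f(x)·a‖` over `f ∈ C(X)`. -/
theorem norm_fibre_eq_inf {X : Type*}
    [TopologicalSpace X] [CompactSpace X] [T2Space X]
    {A : Type*} [NonUnitalNormedRing A] [StarRing A] [CStarRing A]
    [NormedSpace ℂ A] [SMulCommClass ℂ A A] [IsScalarTower ℂ A A] [StarModule ℂ A]
    [NormedStarGroup A]
    (Φ : C(X, ℂ) →⋆ₐ[ℂ] 𝓜(ℂ, A))
    (hcentral : ∀ f : C(X, ℂ), Φ f ∈ Set.center 𝓜(ℂ, A))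
    (a : A) (x : X) :
    infDist a (fibreIdeal Φ x) =
      sInf (Set.range fun f : C(X, ℂ) => ‖a - (Φ f).toProd.1 a + f x • a‖) := by
  have hS0 : (0 : A) ∈ fibreIdeal Φ x := subset_closure (Submodule.zero_mem _)
  have hSne : (fibreIdeal Φ x).Nonempty := ⟨0, hS0⟩
  have hbdd : BddBelow (Set.range fun f : C(X, ℂ) => ‖a - (Φ f).toProd.1 a + f x • a‖) := by
    refine ⟨0, ?_⟩
    rintro r ⟨f, rfl⟩
    positivity
  apply le_antisymm
  · -- infDist ≤ every element of the range
    refine le_csInf (Set.range_nonempty _) ?_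
    rintro r ⟨f, rfl⟩
    have hval : (f - f x • 1) x = 0 := by
      simp
    have hact : (Φ (f - f x • 1)).toProd.1 a = (Φ f).toProd.1 a - f x • a := by
      rw [sub_act, map_smul, map_one]
      rw [show (f x • (1 : 𝓜(ℂ, A))).toProd.1 = f x • (1 : 𝓜(ℂ, A)).toProd.1 from
        DoubleCentralizer.smul_fst _ _]
      rw [show (1 : 𝓜(ℂ, A)).toProd.1 = 1 from DoubleCentralizer.one_fst]
      simp [ContinuousLinearMap.smul_apply, ContinuousLinearMap.one_apply]
    have hmem : (Φ f).toProd.1 a - f x • a ∈ fibreIdeal Φ x := by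
      apply subset_closure
      apply Submodule.subset_span
      exact ⟨f - f x • 1, a, hval, hact.symm⟩
    have h := infDist_le_dist_of_mem (x := a) hmem
    rw [dist_eq_norm] at h
    have heq : a - ((Φ f).toProd.1 a - f x • a) = a - (Φ f).toProd.1 a + f x • a := by
      abel
    rwa [heq] at h
  · -- sInf range ≤ infDist
    refine le_of_forall_pos_le_add ?_
    intro ε hε
    obtain ⟨j, hjS, hj⟩ := (infDist_lt_iff hSne).1
      (lt_add_of_pos_right _ (by linarith : (0 : ℝ) < ε / 3))
    obtain ⟨j', hj'mem, hjj'⟩ := Metric.mem_closure_iff.1 hjS (ε / 3) (by linarith)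
    rw [SetLike.mem_coe] at hj'mem
    obtain ⟨g, hgx, him, h0, h1, hgj'⟩ := approx_unit Φ x j' hj'mem (ε / 3) (by linarith)
    have hdecomp : a - (Φ g).toProd.1 a =
        ((a - j) - (Φ g).toProd.1 (a - j)) + ((j - j') - (Φ g).toProd.1 (j - j')) +
        (j' - (Φ g).toProd.1 j') := by
      rw [(Φ g).toProd.1.map_sub, (Φ g).toProd.1.map_sub]
      abel
    have hb1 : ‖(a - j) - (Φ g).toProd.1 (a - j)‖ ≤ ‖a - j‖ := keyB Φ g him h0 h1 _
    have hb2 : ‖(j - j') - (Φ g).toProd.1 (j - j')‖ ≤ ‖j - j'‖ := keyB Φ g him h0 h1 _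
    have hj2 : ‖j - j'‖ < ε / 3 := by rwa [← dist_eq_norm]
    have hj1 : ‖a - j‖ < infDist a (fibreIdeal Φ x) + ε / 3 := by rwa [← dist_eq_norm]
    calc sInf (Set.range fun f : C(X, ℂ) => ‖a - (Φ f).toProd.1 a + f x • a‖) ≤
        ‖a - (Φ g).toProd.1 a + g x • a‖ := csInf_le hbdd ⟨g, rfl⟩
    _ = ‖a - (Φ g).toProd.1 a‖ := by rw [hgx, zero_smul, add_zero]
    _ ≤ ‖(a - j) - (Φ g).toProd.1 (a - j)‖ + ‖(j - j') - (Φ g).toProd.1 (j - j')‖ +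
        ‖j' - (Φ g).toProd.1 j'‖ := by
          rw [hdecomp]
          exact norm_add₃_le
    _ ≤ (infDist a (fibreIdeal Φ x) + ε / 3) + (ε / 3) + (ε / 3) := by
          have h5 := hb1.trans_lt hj1
          have h6 := hb2.trans_lt hj2
          linarith
    _ = infDist a (fibreIdeal Φ x) + ε := by ring
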